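/- Let $(W_t)_{t\ge 0}$ be a standard Brownian motion and $a>0$. With $W^+, W^-$ the reflected processes $W^+_t = W_t - \inf_{s\le t}W_s$, $W^-_t = \sup_{s\le t}W_s - W_t$, and $\gamma^\pm_a$ their respective hitting times of level $a$, one has $\gamma^+_a \wedge \gamma^-_a = \inf\{r\ge 0 : W^+_r + W^-_r = a\}$; moreover, on the event $\{\gamma^+_a < \gamma^-_a\}$ one has $W^-_{\gamma^+_a}=0$, and on $\{\gamma^-_a < \gamma^+_a\}$ one has $W^+_{\gamma^-_a}=0$. -/

import Mathlib

open MeasureTheory ProbabilityTheory Filter Set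
open scoped ENNReal NNReal

/-- A standard Brownian motion (indexed by `ℝ`, relevant for `t ≥ 0`), started at `0`. -/
structure IsBrownianMotion {Ω : Type*} [MeasurableSpace Ω] (P : Measure Ω)
    (W : ℝ → Ω → ℝ) : Prop where
  isProb : IsProbabilityMeasure P
  meas : ∀ t, Measurable (W t)
  start : ∀ ω, W 0 ω = 0
  cont : ∀ ω, Continuous fun t => W t ω
  incr : ∀ s t : ℝ, 0 ≤ s → s ≤ t →
    P.map (fun ω => W t ω - W s ω) = gaussianReal 0 (Real.toNNReal (t - s))
  indep : ∀ (n : ℕ) (t : Fin (n + 1) → ℝ), (∀ i, 0 ≤ t i) → Monotone t →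
    iIndepFun
      (fun i : Fin n => fun ω => W (t i.succ) ω - W (t i.castSucc) ω) P

variable {Ω : Type*} [MeasurableSpace Ω]

/-- `W⁺_t = W_t - inf_{s ≤ t} W_s`, the Brownian motion reflected at its running infimum. -/
noncomputable def Wplus (W : ℝ → Ω → ℝ) (t : ℝ) (ω : Ω) : ℝ :=
  W t ω - sInf ((fun s => W s ω) '' Set.Icc 0 t)

/-- `W⁻_t = sup_{s ≤ t} W_s - W_t`, the Brownian motion reflected at its running supremum. -/
noncomputable def Wminus (W : ℝ → Ω → ℝ) (t : ℝ) (ω : Ω) : ℝ :=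
  sSup ((fun s => W s ω) '' Set.Icc 0 t) - W t ω

/-- `γ⁺_a`: first hitting time of `a` by `W⁺`. -/
noncomputable def gammaPlus (W : ℝ → Ω → ℝ) (a : ℝ) (ω : Ω) : ℝ :=
  sInf {r : ℝ | 0 ≤ r ∧ Wplus W r ω = a}

/-- `γ⁻_a`: first hitting time of `a` by `W⁻`. -/
noncomputable def gammaMinus (W : ℝ → Ω → ℝ) (a : ℝ) (ω : Ω) : ℝ :=
  sInf {r : ℝ | 0 ≤ r ∧ Wminus W r ω = a}

/-! ### Deterministic path lemmas -/

section Deterministic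

variable {f : ℝ → ℝ}

private lemma img_ne (f : ℝ → ℝ) {t : ℝ} (ht : 0 ≤ t) : (f '' Icc 0 t).Nonempty :=
  ⟨f 0, mem_image_of_mem f ⟨le_refl 0, ht⟩⟩

private lemma bddA (hf : Continuous f) (t : ℝ) : BddAbove (f '' Icc 0 t) :=
  (isCompact_Icc.image hf).bddAbove

private lemma bddB (hf : Continuous f) (t : ℝ) : BddBelow (f '' Icc 0 t) :=
  (isCompact_Icc.image hf).bddBelow

private lemma le_M (hf : Continuous f) {t : ℝ} (ht : 0 ≤ t) : f t ≤ sSup (f '' Icc 0 t) :=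
  le_csSup (bddA hf t) (mem_image_of_mem f ⟨ht, le_rfl⟩)

private lemma m_le (hf : Continuous f) {t : ℝ} (ht : 0 ≤ t) : sInf (f '' Icc 0 t) ≤ f t :=
  csInf_le (bddB hf t) (mem_image_of_mem f ⟨ht, le_rfl⟩)

private lemma M_mono (hf : Continuous f) {s t : ℝ} (hs : 0 ≤ s) (hst : s ≤ t) :
    sSup (f '' Icc 0 s) ≤ sSup (f '' Icc 0 t) :=
  csSup_le_csSup (bddA hf t) (img_ne f hs) (image_mono (f := f) (Icc_subset_Icc_right hst))

private lemma m_anti (hf : Continuous f) {s t : ℝ} (hs : 0 ≤ s) (hst : s ≤ t) :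
    sInf (f '' Icc 0 t) ≤ sInf (f '' Icc 0 s) :=
  csInf_le_csInf (bddB hf t) (img_ne f hs) (image_mono (f := f) (Icc_subset_Icc_right hst))

private lemma himg {t : ℝ} (ht : 0 ≤ t) : (fun u : ℝ => t * u) '' Icc 0 1 = Icc 0 t := by
  ext x
  simp only [mem_image, mem_Icc]
  constructor
  · rintro ⟨u, ⟨hu0, hu1⟩, rfl⟩
    exact ⟨mul_nonneg ht hu0, mul_le_of_le_one_right ht hu1⟩
  · rintro ⟨hx0, hxt⟩
    rcases eq_or_lt_of_le ht with h0 | h0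
    · refine ⟨0, ⟨le_rfl, zero_le_one⟩, ?_⟩
      have : x = 0 := le_antisymm (hxt.trans h0.symm.le) hx0
      simp [this]
    · exact ⟨x / t, ⟨div_nonneg hx0 h0.le, (div_le_one h0).mpr hxt⟩, by field_simp⟩

private lemma M_cont (hf : Continuous f) :
    ContinuousOn (fun t => sSup (f '' Icc 0 t)) (Ici 0) := by
  have hc : Continuous fun t : ℝ => sSup ((fun u => f (t * u)) '' Icc (0 : ℝ) 1) :=
    isCompact_Icc.continuous_sSup (hf.comp (continuous_fst.mul continuous_snd))
  refine hc.continuousOn.congr fun t ht => ?_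
  show sSup (f '' Icc 0 t) = sSup ((fun u => f (t * u)) '' Icc 0 1)
  rw [show (fun u : ℝ => f (t * u)) = f ∘ (fun u : ℝ => t * u) from rfl, image_comp,
    himg (mem_Ici.mp ht)]

private lemma m_cont (hf : Continuous f) :
    ContinuousOn (fun t => sInf (f '' Icc 0 t)) (Ici 0) := by
  have hc : Continuous fun t : ℝ => sInf ((fun u => f (t * u)) '' Icc (0 : ℝ) 1) :=
    isCompact_Icc.continuous_sInf (hf.comp (continuous_fst.mul continuous_snd))
  refine hc.continuousOn.congr fun t ht => ?_
  show sInf (f '' Icc 0 t) = sInf ((fun u => f (t * u)) '' Icc 0 1)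
  rw [show (fun u : ℝ => f (t * u)) = f ∘ (fun u : ℝ => t * u) from rfl, image_comp,
    himg (mem_Ici.mp ht)]

private lemma M_zero (hf0 : f 0 = 0) : sSup (f '' Icc (0:ℝ) 0) = 0 := by
  rw [Icc_self, image_singleton, csSup_singleton, hf0]

private lemma m_zero (hf0 : f 0 = 0) : sInf (f '' Icc (0:ℝ) 0) = 0 := by
  rw [Icc_self, image_singleton, csInf_singleton, hf0]

/-- The key deterministic lemma. -/
private lemma key {Ω : Type*} [MeasurableSpace Ω] (W : ℝ → Ω → ℝ) (ω : Ω)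
    (hf : Continuous fun t => W t ω) (hf0 : W 0 ω = 0) {a : ℝ} (ha : 0 < a)
    (hp : ∃ r, 0 ≤ r ∧ Wplus W r ω = a) (hm : ∃ r, 0 ≤ r ∧ Wminus W r ω = a) :
    min (gammaPlus W a ω) (gammaMinus W a ω)
        = sInf {r : ℝ | 0 ≤ r ∧ Wplus W r ω + Wminus W r ω = a} ∧
    (gammaPlus W a ω < gammaMinus W a ω → Wminus W (gammaPlus W a ω) ω = 0) ∧
    (gammaMinus W a ω < gammaPlus W a ω → Wplus W (gammaMinus W a ω) ω = 0) := by
  classical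
  set f : ℝ → ℝ := fun s => W s ω with hfdef
  have hWf : ∀ r : ℝ, W r ω = f r := fun r => rfl
  simp only [gammaPlus, gammaMinus, Wplus, Wminus, hWf] at *
  set M : ℝ → ℝ := fun t => sSup (f '' Icc 0 t) with hMdef
  set m : ℝ → ℝ := fun t => sInf (f '' Icc 0 t) with hmdef
  -- rewrite the range set
  have hSeq : {r : ℝ | 0 ≤ r ∧ (f r - m r) + (M r - f r) = a}
      = {r : ℝ | 0 ≤ r ∧ M r - m r = a} := by
    ext r; simp only [mem_setOf_eq, sub_add_sub_cancel']
  rw [hSeq]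
  set S : Set ℝ := {r : ℝ | 0 ≤ r ∧ M r - m r = a} with hSdef
  set Sp : Set ℝ := {r : ℝ | 0 ≤ r ∧ f r - m r = a} with hSpdef
  set Sm : Set ℝ := {r : ℝ | 0 ≤ r ∧ M r - f r = a} with hSmdef
  have hgmono : ∀ s t : ℝ, 0 ≤ s → s ≤ t → M s - m s ≤ M t - m t :=
    fun s t hs hst => sub_le_sub (M_mono hf hs hst) (m_anti hf hs hst)
  have hgcont : ContinuousOn (fun t => M t - m t) (Ici 0) := (M_cont hf).sub (m_cont hf)
  have hg0 : M 0 - m 0 = 0 := by rw [hMdef, hmdef]; simp only; rw [M_zero hf0, m_zero hf0, sub_zero]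
  have hIVT : ∀ r : ℝ, 0 ≤ r → a ≤ M r - m r → ∃ s, 0 ≤ s ∧ s ≤ r ∧ M s - m s = a := by
    intro r hr hge
    have hsub : Icc (0:ℝ) r ⊆ Ici 0 := Icc_subset_Ici_self
    have := intermediate_value_Icc hr (hgcont.mono hsub)
    obtain ⟨s, hs, hsa⟩ := this ⟨by rw [hg0]; exact ha.le, hge⟩
    exact ⟨s, hs.1, hs.2, hsa⟩
  have hSp_ne : Sp.Nonempty := hp
  have hSm_ne : Sm.Nonempty := hm
  have hS_ne : S.Nonempty := by
    obtain ⟨r, hr0, hra⟩ := hp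
    have hge : a ≤ M r - m r := by
      rw [← hra]; exact sub_le_sub_right (le_M hf hr0) _
    obtain ⟨s, hs0, _, hsa⟩ := hIVT r hr0 hge
    exact ⟨s, hs0, hsa⟩
  have hSbdd : BddBelow S := ⟨0, fun x hx => hx.1⟩
  have hScl : IsClosed S := by
    have : S = Ici 0 ∩ (fun t => M t - m t) ⁻¹' {a} := by
      ext r; simp [hSdef, mem_Ici, and_comm]
    rw [this]
    exact hgcont.preimage_isClosed_of_isClosed isClosed_Ici isClosed_singleton
  have hτS : sInf S ∈ S := hScl.csInf_mem hS_ne hSbdd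
  set τ : ℝ := sInf S with hτdef
  have hτ0 : 0 ≤ τ := hτS.1
  have hgτ : M τ - m τ = a := hτS.2
  have hτle : ∀ r ∈ S, τ ≤ r := fun r hr => csInf_le hSbdd hr
  have hlt : ∀ s : ℝ, 0 ≤ s → s < τ → M s - m s < a := by
    intro s hs hsτ
    refine lt_of_le_of_ne ((hgmono s τ hs hsτ.le).trans hgτ.le) fun h => ?_
    exact absurd (hτle s ⟨hs, h⟩) (not_le.2 hsτ)
  have hτ_lb_p : ∀ r ∈ Sp, τ ≤ r := by
    rintro r ⟨hr0, hra⟩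
    have hge : a ≤ M r - m r := by rw [← hra]; exact sub_le_sub_right (le_M hf hr0) _
    obtain ⟨s, hs0, hsr, hsa⟩ := hIVT r hr0 hge
    exact (hτle s ⟨hs0, hsa⟩).trans hsr
  have hτ_lb_m : ∀ r ∈ Sm, τ ≤ r := by
    rintro r ⟨hr0, hra⟩
    have hge : a ≤ M r - m r := by rw [← hra]; exact sub_le_sub_left (m_le hf hr0) _
    obtain ⟨s, hs0, hsr, hsa⟩ := hIVT r hr0 hge
    exact (hτle s ⟨hs0, hsa⟩).trans hsr
  have hγp_ge : τ ≤ sInf Sp := le_csInf hSp_ne hτ_lb_p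
  have hγm_ge : τ ≤ sInf Sm := le_csInf hSm_ne hτ_lb_m
  have hbddSp : BddBelow Sp := ⟨0, fun x hx => hx.1⟩
  have hbddSm : BddBelow Sm := ⟨0, fun x hx => hx.1⟩
  have hor : f τ = M τ ∨ f τ = m τ := by
    by_cases h1 : ∃ s, 0 ≤ s ∧ s < τ ∧ M s = M τ
    · right
      by_cases h2 : ∃ s, 0 ≤ s ∧ s < τ ∧ m s = m τ
      · exfalso
        obtain ⟨s1, hs10, hs1τ, hs1⟩ := h1
        obtain ⟨s2, hs20, hs2τ, hs2⟩ := h2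
        set s := max s1 s2 with hs
        have hs0 : 0 ≤ s := le_trans hs10 (le_max_left _ _)
        have hsτ : s < τ := max_lt hs1τ hs2τ
        have hMs : M s = M τ :=
          le_antisymm (M_mono hf hs0 hsτ.le) (hs1 ▸ M_mono hf hs10 (le_max_left _ _))
        have hms : m s = m τ :=
          le_antisymm (hs2 ▸ m_anti hf hs20 (le_max_right _ _)) (m_anti hf hs0 hsτ.le)
        have hgs : M s - m s = a := by rw [hMs, hms]; exact hgτ
        exact absurd hgs (ne_of_lt (hlt s hs0 hsτ))
      · obtain ⟨t₀, ht₀, hft₀⟩ :=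
          isCompact_Icc.exists_sInf_image_eq (nonempty_Icc.2 hτ0) hf.continuousOn
        rcases lt_or_eq_of_le ht₀.2 with hlt' | heq
        · exfalso
          refine h2 ⟨t₀, ht₀.1, hlt', le_antisymm ?_ (m_anti hf ht₀.1 ht₀.2)⟩
          exact (m_le hf ht₀.1).trans hft₀.symm.le
        · rw [heq] at hft₀
          exact hft₀.symm
    · left
      obtain ⟨t₀, ht₀, hft₀⟩ :=
        isCompact_Icc.exists_sSup_image_eq (nonempty_Icc.2 hτ0) hf.continuousOn
      rcases lt_or_eq_of_le ht₀.2 with hlt' | heq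
      · exfalso
        refine h1 ⟨t₀, ht₀.1, hlt', le_antisymm (M_mono hf ht₀.1 ht₀.2) ?_⟩
        exact hft₀.le.trans (le_M hf ht₀.1)
      · rw [heq] at hft₀
        exact hft₀.symm
  rcases hor with hcase | hcase
  · -- f τ = M τ : the plus process hits a at τ
    have hfm : f τ - m τ = a := by rw [hcase]; exact hgτ
    have hγp : sInf Sp = τ := le_antisymm (csInf_le hbddSp ⟨hτ0, hfm⟩) hγp_ge
    refine ⟨?_, ?_, ?_⟩
    · rw [min_eq_left (hγp.le.trans hγm_ge)]; exact hγp
    · intro _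
      rw [hγp, hcase, sub_self]
    · intro hlt'
      exact absurd hlt' (not_lt.2 (hγp ▸ hγm_ge))
  · -- f τ = m τ : the minus process hits a at τ
    have hfm : M τ - f τ = a := by rw [hcase]; exact hgτ
    have hγm : sInf Sm = τ := le_antisymm (csInf_le hbddSm ⟨hτ0, hfm⟩) hγm_ge
    refine ⟨?_, ?_, ?_⟩
    · rw [min_eq_right (hγm.le.trans hγp_ge)]; exact hγm
    · intro hlt'
      exact absurd hlt' (not_lt.2 (hγm ▸ hγp_ge))
    · intro _
      rw [hγm, hcase, sub_self]

end Deterministic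

/-! ### Gaussian measure lemmas -/

private lemma gauss_Icc_pos {b c : ℝ} (hbc : b < c) : 0 < gaussianReal 0 1 (Icc b c) := by
  rw [gaussianReal_apply 0 one_ne_zero]
  set B : ℝ := max |b| |c| with hB
  have hpdf_lb : ∀ x ∈ Icc b c, ENNReal.ofReal (gaussianPDFReal 0 1 B) ≤ gaussianPDF 0 1 x := by
    intro x hx
    refine ENNReal.ofReal_le_ofReal ?_
    simp only [gaussianPDFReal, NNReal.coe_one, mul_one, sub_zero]
    have hxB : |x| ≤ B := by
      rw [abs_le]
      constructor
      · have : -|b| ≤ b := neg_abs_le b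
        have hBb : |b| ≤ B := le_max_left _ _
        linarith [hx.1]
      · have : c ≤ |c| := le_abs_self c
        have hBc : |c| ≤ B := le_max_right _ _
        linarith [hx.2]
    have hsq : x ^ 2 ≤ B ^ 2 := sq_le_sq' (neg_le_of_abs_le hxB) (le_of_abs_le hxB)
    have hexp : Real.exp (-B ^ 2 / 2) ≤ Real.exp (-x ^ 2 / 2) := by
      apply Real.exp_le_exp.mpr
      nlinarith
    have h0 : (0:ℝ) ≤ (√(2 * Real.pi))⁻¹ := by positivity
    exact mul_le_mul_of_nonneg_left hexp h0
  calc (0 : ℝ≥0∞) < ENNReal.ofReal (gaussianPDFReal 0 1 B) * volume (Icc b c) := by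
        refine ENNReal.mul_pos ?_ ?_
        · exact (ENNReal.ofReal_pos.mpr (gaussianPDFReal_pos 0 1 B one_ne_zero)).ne'
        · rw [Real.volume_Icc]
          exact (ENNReal.ofReal_pos.mpr (by linarith)).ne'
    _ = ∫⁻ _ in Icc b c, ENNReal.ofReal (gaussianPDFReal 0 1 B) := by
        rw [setLIntegral_const]
    _ ≤ ∫⁻ x in Icc b c, gaussianPDF 0 1 x :=
        setLIntegral_mono (measurable_gaussianPDF 0 1) hpdf_lb

private lemma gauss_lt_one {s : Set ℝ} {b c : ℝ} (hbc : b < c)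
    (hdisj : Disjoint s (Icc b c)) (hs : MeasurableSet s) :
    gaussianReal 0 1 s < 1 := by
  have hpos := gauss_Icc_pos hbc
  have hle : gaussianReal 0 1 s + gaussianReal 0 1 (Icc b c) ≤ 1 := by
    rw [← measure_union hdisj measurableSet_Icc]
    exact prob_le_one
  by_contra h
  push_neg at h
  have h1 : (1 : ℝ≥0∞) + gaussianReal 0 1 (Icc b c) ≤ 1 + 0 := by
    rw [add_zero]
    exact le_trans (add_le_add h le_rfl) hle
  have := (ENNReal.add_le_add_iff_left ENNReal.one_ne_top).mp h1
  exact absurd (le_antisymm this zero_le) hpos.ne'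

/-! ### Almost surely, some unit increment escapes a given set -/

set_option maxHeartbeats 1000000 in
private lemma ae_exists_incr (P : Measure Ω) (W : ℝ → Ω → ℝ) (hW : IsBrownianMotion P W)
    {s : Set ℝ} (hs : MeasurableSet s) (hq : gaussianReal 0 1 s < 1) :
    ∀ᵐ ω ∂P, ∃ k : ℕ, W ((k : ℝ) + 1) ω - W (k : ℝ) ω ∉ s := by
  have := hW.isProb
  set q : ℝ≥0∞ := gaussianReal 0 1 s with hqdef
  have hkey : ∀ n : ℕ, P {ω | ∀ k : ℕ, W ((k : ℝ) + 1) ω - W (k : ℝ) ω ∈ s} ≤ q ^ n := by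
    intro n
    set t : Fin (n + 1) → ℝ := fun j => ((j : ℕ) : ℝ) with htdef
    have hmono : Monotone t := fun i j hij => by
      simp only [htdef]
      exact_mod_cast Fin.le_def.mp hij
    have hind := hW.indep n t (fun i => Nat.cast_nonneg _) hmono
    have hprod : P (⋂ i ∈ (Finset.univ : Finset (Fin n)),
          (fun ω => W (t i.succ) ω - W (t i.castSucc) ω) ⁻¹' s)
        = ∏ i : Fin n, P ((fun ω => W (t i.succ) ω - W (t i.castSucc) ω) ⁻¹' s) :=
      hind.measure_inter_preimage_eq_mul (S := Finset.univ) (sets := fun _ => s) (fun i _ => hs)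
    have hsingle : ∀ i : Fin n,
        P ((fun ω => W (t i.succ) ω - W (t i.castSucc) ω) ⁻¹' s) = q := by
      intro i
      have hmeas : Measurable fun ω => W (t i.succ) ω - W (t i.castSucc) ω :=
        (hW.meas _).sub (hW.meas _)
      rw [← Measure.map_apply hmeas hs,
        hW.incr (t i.castSucc) (t i.succ) (Nat.cast_nonneg _)
          (hmono (Fin.castSucc_le_succ i))]
      have hts : t i.succ - t i.castSucc = 1 := by
        simp only [htdef, Fin.val_succ, Fin.coe_castSucc]
        push_cast
        ring
      rw [hts, Real.toNNReal_one]
    have step1 : P {ω | ∀ k : ℕ, W ((k : ℝ) + 1) ω - W (k : ℝ) ω ∈ s}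
        ≤ P (⋂ i ∈ (Finset.univ : Finset (Fin n)),
            (fun ω => W (t i.succ) ω - W (t i.castSucc) ω) ⁻¹' s) := by
      apply measure_mono
      intro ω hω
      simp only [Finset.mem_univ, iInter_true, mem_iInter]
      intro i
      have := hω (i : ℕ)
      simpa only [htdef, Fin.val_succ, Fin.coe_castSucc, Nat.cast_add, Nat.cast_one, mem_preimage]
        using this
    refine step1.trans ?_
    rw [hprod, Finset.prod_congr rfl fun i _ => hsingle i]
    simp
  have hzero : P {ω | ∀ k : ℕ, W ((k : ℝ) + 1) ω - W (k : ℝ) ω ∈ s} = 0 := by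
    refine le_antisymm ?_ zero_le
    exact ge_of_tendsto (ENNReal.tendsto_pow_atTop_nhds_zero_of_lt_one hq)
      (Filter.Eventually.of_forall hkey)
  rw [ae_iff]
  convert hzero using 2
  ext ω
  simp

/-- `γ⁺_a ∧ γ⁻_a` is the first time the range `W⁺ + W⁻` of the path equals `a`; on
`{γ⁺_a < γ⁻_a}` one has `W⁻_{γ⁺_a} = 0`, and on `{γ⁻_a < γ⁺_a}` one has `W⁺_{γ⁻_a} = 0`. -/
theorem range_hitting_time_and_boundary
    (P : Measure Ω) (W : ℝ → Ω → ℝ) (hW : IsBrownianMotion P W)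
    (a : ℝ) (ha : 0 < a) :
    ∀ᵐ ω ∂P,
      min (gammaPlus W a ω) (gammaMinus W a ω)
          = sInf {r : ℝ | 0 ≤ r ∧ Wplus W r ω + Wminus W r ω = a} ∧
      (gammaPlus W a ω < gammaMinus W a ω → Wminus W (gammaPlus W a ω) ω = 0) ∧
      (gammaMinus W a ω < gammaPlus W a ω → Wplus W (gammaMinus W a ω) ω = 0) := by
  have hlt1 : gaussianReal 0 1 (Iic a) < 1 := by
    refine gauss_lt_one (b := a + 1) (c := a + 2) (by linarith) ?_ measurableSet_Iic
    rw [Set.disjoint_left]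
    intro x hx hx2
    simp only [mem_Iic] at hx
    have := hx2.1
    linarith
  have hlt2 : gaussianReal 0 1 (Ici (-a)) < 1 := by
    refine gauss_lt_one (b := -a - 2) (c := -a - 1) (by linarith) ?_ measurableSet_Ici
    rw [Set.disjoint_left]
    intro x hx hx2
    simp only [mem_Ici] at hx
    have := hx2.2
    linarith
  have h1 := ae_exists_incr P W hW measurableSet_Iic hlt1
  have h2 := ae_exists_incr P W hW measurableSet_Ici hlt2
  filter_upwards [h1, h2] with ω hω1 hω2
  have hf : Continuous fun t => W t ω := hW.cont ω
  have hf0 : W 0 ω = 0 := hW.start ω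
  -- W⁺ hits a
  have hp : ∃ r, 0 ≤ r ∧ Wplus W r ω = a := by
    obtain ⟨k, hk⟩ := hω1
    simp only [mem_Iic, not_le] at hk
    have hk1 : (0:ℝ) ≤ (k : ℝ) + 1 := by positivity
    have hmem : W (k:ℝ) ω ∈ (fun s => W s ω) '' Icc 0 ((k:ℝ) + 1) :=
      mem_image_of_mem _ ⟨Nat.cast_nonneg _, by linarith⟩
    have hinf_le : sInf ((fun s => W s ω) '' Icc 0 ((k:ℝ) + 1)) ≤ W (k:ℝ) ω :=
      csInf_le (bddB hf _) hmem
    have hWp : a ≤ Wplus W ((k:ℝ) + 1) ω := by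
      unfold Wplus
      linarith
    have hcont : ContinuousOn (fun r => Wplus W r ω) (Ici 0) := by
      unfold Wplus
      exact hf.continuousOn.sub (m_cont hf)
    have h0 : Wplus W 0 ω = 0 := by
      unfold Wplus
      rw [hf0, m_zero hf0, sub_zero]
    have := intermediate_value_Icc hk1 (hcont.mono Icc_subset_Ici_self)
    obtain ⟨r, hr, hra⟩ := this ⟨by rw [h0]; exact ha.le, hWp⟩
    exact ⟨r, hr.1, hra⟩
  -- W⁻ hits a
  have hm : ∃ r, 0 ≤ r ∧ Wminus W r ω = a := by
    obtain ⟨k, hk⟩ := hω2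
    simp only [mem_Ici, not_le] at hk
    have hk1 : (0:ℝ) ≤ (k : ℝ) + 1 := by positivity
    have hmem : W (k:ℝ) ω ∈ (fun s => W s ω) '' Icc 0 ((k:ℝ) + 1) :=
      mem_image_of_mem _ ⟨Nat.cast_nonneg _, by linarith⟩
    have hsup_ge : W (k:ℝ) ω ≤ sSup ((fun s => W s ω) '' Icc 0 ((k:ℝ) + 1)) :=
      le_csSup (bddA hf _) hmem
    have hWm : a ≤ Wminus W ((k:ℝ) + 1) ω := by
      unfold Wminus
      linarith
    have hcont : ContinuousOn (fun r => Wminus W r ω) (Ici 0) := by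
      unfold Wminus
      exact (M_cont hf).sub hf.continuousOn
    have h0 : Wminus W 0 ω = 0 := by
      unfold Wminus
      rw [hf0, M_zero hf0, sub_zero]
    have := intermediate_value_Icc hk1 (hcont.mono Icc_subset_Ici_self)
    obtain ⟨r, hr, hra⟩ := this ⟨by rw [h0]; exact ha.le, hWm⟩
    exact ⟨r, hr.1, hra⟩
  exact key W ω hf hf0 ha hp hm
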